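/- For the weights π and p defined from Pochhammer symbols, the identity π_{j,K}(a,b) π_{k-j,K-j}(a+δ+2j, δ) = π_{k,K}(a+δ, b+δ) · p_{j,k}(a/2, b-a/2, a/2+δ+k) holds for all 0 ≤ j ≤ k ≤ K and admissible real a, b, δ. -/

import Mathlib

/-- Pochhammer symbol `(a)_k = a(a+1)⋯(a+k-1)`. -/
noncomputable def poch (a : ℝ) (k : ℕ) : ℝ := ∏ i ∈ Finset.range k, (a + i)
/-- Normalizing constant `C_N(a,b,c)` of Wilson's 6-j weights. -/
noncomputable def wC (N : ℕ) (a b c : ℝ) : ℝ :=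
  poch (a - b + 1) N * poch (a - c + 1) N / (poch (2*a + 1) N * poch (-b - c + 1) N)
/-- Wilson's 6-j weight `p_{k,N}(a,b,c)`. -/
noncomputable def wp (k N : ℕ) (a b c : ℝ) : ℝ :=
  wC N a b c *
    (poch (2*a) k * poch (a + 1) k * poch (a + b) k * poch (a + c) k * poch (-(N : ℝ)) k /
      ((k.factorial : ℝ) * poch a k * poch (a - b + 1) k * poch (a - c + 1) k *
        poch (2*a + N + 1) k))
/-- The product of all Pochhammer factors appearing in denominators of `wp k N a b c`. -/
noncomputable def wpden (k N : ℕ) (a b c : ℝ) : ℝ :=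
  poch (2*a + 1) N * poch (-b - c + 1) N * poch a k * poch (a - b + 1) k *
    poch (a - c + 1) k * poch (2*a + N + 1) k
/-- The weights `π_{j,K}(a,b)`. -/
noncomputable def piw (j K : ℕ) (a b : ℝ) : ℝ :=
  (K.choose j : ℝ) * (poch (a - b + j + 1) (K - j) / poch (a + 2*j + 1) (K - j)) *
    (poch b j / poch (a + j) j)
/-- Product of the Pochhammer factors in the denominator of `piw j K a b`. -/
noncomputable def piwden (j K : ℕ) (a b : ℝ) : ℝ :=
  poch (a + 2*j + 1) (K - j) * poch (a + j) j

lemma poch_zero (a : ℝ) : poch a 0 = 1 := rfl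
lemma poch_succ (a : ℝ) (n : ℕ) : poch a (n+1) = poch a n * (a + n) := Finset.prod_range_succ _ _

lemma poch_add (a : ℝ) (m n : ℕ) : poch a (m + n) = poch a m * poch (a + m) n := by
  induction n with
  | zero => simp [poch_zero]
  | succ n ih => rw [← Nat.add_assoc, poch_succ, ih, poch_succ]; push_cast; ring

lemma poch_reflect (a : ℝ) (n : ℕ) : poch a n = (-1)^n * poch (1 - a - n) n := by
  induction n with
  | zero => simp [poch_zero]
  | succ n ih =>
    have h : poch (1 - a - (n+1:ℕ)) (n+1) = (1 - a - (n+1:ℕ)) * poch (1 - a - n) n := by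
      have := poch_add (1 - a - ((n:ℝ)+1)) 1 n
      rw [Nat.add_comm] at this
      push_cast
      rw [this, poch_succ, poch_zero]
      ring_nf
    rw [poch_succ, ih, h]; push_cast; ring

lemma poch_nat_fac (m j : ℕ) : poch ((m:ℝ)+1) j * (m.factorial) = ((m+j).factorial) := by
  induction j with
  | zero => simp [poch_zero]
  | succ j ih =>
    rw [poch_succ, show m + (j+1) = (m+j)+1 from rfl, Nat.factorial_succ]
    push_cast
    nlinarith [ih]

lemma poch_neg_nat (j m : ℕ) :
    poch (-((j:ℝ)+m)) j * (m.factorial) = (-1)^j * ((j+m).factorial) := by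
  rw [poch_reflect]
  have e : (1 - -((j:ℝ)+m) - j) = (m:ℝ) + 1 := by push_cast; ring
  rw [e, mul_assoc, poch_nat_fac, Nat.add_comm m j]

lemma poch_key (a : ℝ) (j : ℕ) :
    poch (a+1) (2*j) * poch (a/2) j = poch a (2*j) * poch (a/2+1) j := by
  induction j with
  | zero => simp [poch_zero]
  | succ j ih =>
    have e2 : 2*(j+1) = (2*j) + 1 + 1 := by ring
    simp only [e2, poch_succ]
    push_cast
    linear_combination ih * ((a+2*j+1)*(a+2*j+2)*(a/2+j))

lemma poch_neg_div (j m : ℕ) :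
    poch (-(j:ℝ) - m) j = (-1)^j * ((j+m).factorial) / (m.factorial) := by
  have h := poch_neg_nat j m
  have e : (-((j:ℝ)+m)) = -(j:ℝ) - m := by ring
  rw [e] at h
  have hm : ((m.factorial : ℝ)) ≠ 0 := Nat.cast_ne_zero.mpr m.factorial_ne_zero
  field_simp
  linarith [h]

lemma poch_eq_zero (a : ℝ) (n i : ℕ) (hi : i < n) (h : a + i = 0) : poch a n = 0 :=
  Finset.prod_eq_zero (Finset.mem_range.mpr hi) h

set_option maxHeartbeats 2000000 in
theorem piw_product_identity (j k K : ℕ) (a b δ : ℝ)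
    (hjk : j ≤ k) (hkK : k ≤ K)
    (h1 : piwden j K a b ≠ 0)
    (h2 : piwden (k - j) (K - j) (a + δ + 2*j) δ ≠ 0)
    (h3 : piwden k K (a + δ) (b + δ) ≠ 0)
    (h4 : wpden j k (a/2) (b - a/2) (a/2 + δ + k) ≠ 0) :
    piw j K a b * piw (k - j) (K - j) (a + δ + 2*j) δ
      = piw k K (a + δ) (b + δ) * wp j k (a/2) (b - a/2) (a/2 + δ + k) := by
  obtain ⟨m, rfl⟩ := Nat.exists_eq_add_of_le hjk
  obtain ⟨n, rfl⟩ := Nat.exists_eq_add_of_le hkK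
  have ejm : j + m - j = m := by omega
  have ejmn : j + m + n - j = m + n := by omega
  have ekn : j + m + n - (j + m) = n := by omega
  have emn : m + n - m = n := by omega
  simp only [piw, wp, wC, piwden, wpden, ejm, ejmn, ekn, emn] at *
  push_cast at *
  ring_nf at h1 h2 h3 h4 ⊢
  -- split lemmas
  have hA : poch (1 + a + ↑j - b) (m + n)
      = poch (1 + a + ↑j - b) m * poch (1 + a + ↑j + ↑m - b) n := by
    rw [poch_add]; try ring_nf
  have hB : poch (1 + a + ↑j * 2) (m + n)
      = poch (1 + a + ↑j * 2) m * poch (1 + a + ↑j * 2 + ↑m) n := by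
    rw [poch_add]; try ring_nf
  have hC : poch (δ + b) (m + j)
      = (-1)^(m+j) * poch (1 - ↑j - δ - ↑m - b) (m + j) := by
    rw [poch_reflect]; push_cast; ring_nf
  have hD : poch (a + ↑j + δ + ↑m) (m + j)
      = poch (a + ↑j + δ + ↑m) j * poch (a + ↑j * 2 + δ + ↑m) m := by
    rw [show m + j = j + m from Nat.add_comm m j, poch_add]; try ring_nf
  have hE : poch (1 + a - b) (m + j)
      = poch (1 + a - b) j * poch (1 + a + ↑j - b) m := by
    rw [show m + j = j + m from Nat.add_comm m j, poch_add]; try ring_nf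
  have hF : poch (1 - ↑j - δ - ↑m) (m + j)
      = poch (1 - ↑j - δ - ↑m) j * ((-1)^m * poch δ m) := by
    rw [show m + j = j + m from Nat.add_comm m j, poch_add,
        poch_reflect (1 - (j:ℝ) - δ - ↑m + ↑j) m]
    ring_nf
  rw [hB] at h1
  rw [hD] at h3
  simp only [mul_ne_zero_iff] at h1 h2 h3 h4
  obtain ⟨⟨hB1, hB2⟩, hQ2⟩ := h1
  obtain ⟨h2a, h2b⟩ := h2
  obtain ⟨h3a, h3b, h3c⟩ := h3
  obtain ⟨⟨⟨⟨⟨h4a, h4b⟩, h4c⟩, h4d⟩, h4e⟩, h4f⟩ := h4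
  have hG2 : poch (1+a) (m+j) * poch (1 + a + (j:ℝ) + ↑m) j
      = poch (1+a) (2*j) * poch (1 + a + (j:ℝ)*2) m := by
    have t1 := poch_add (1+a) (m+j) j
    have t2 := poch_add (1+a) (2*j) m
    rw [show m + j + j = 2*j + m from by omega, t2] at t1
    push_cast at t1
    ring_nf at t1 ⊢
    linarith [t1]
  have t3 : poch a (2*j) = poch a j * poch (a + (j:ℝ)) j := by
    have := poch_add a j j
    rwa [show j + j = 2*j from by omega] at this
  have hk := poch_key a j
  have hG : poch (1+a) (m+j)
      = poch a j * poch (a + (j:ℝ)) j * poch (1 + a*(1/2)) j * poch (1 + a + (j:ℝ)*2) m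
        / (poch (a*(1/2)) j * poch (1 + a + (j:ℝ) + ↑m) j) := by
    rw [eq_div_iff (mul_ne_zero h4c h4f)]
    ring_nf at hk t3 hG2 ⊢
    linear_combination hG2 * poch (a*(1/2)) j + hk * poch (1 + a + (j:ℝ)*2) m
      + t3 * (poch (1 + a*(1/2)) j * poch (1 + a + (j:ℝ)*2) m)
  have haj : poch a j ≠ 0 := by
    intro h0
    rw [poch, Finset.prod_eq_zero_iff] at h0
    obtain ⟨i, hi, hai⟩ := h0
    rw [Finset.mem_range] at hi
    rcases Nat.eq_zero_or_pos i with rfl | hip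
    · exact h4c (poch_eq_zero _ _ 0 hi (by push_cast at hai ⊢; linarith))
    · refine h4a (poch_eq_zero _ _ (i-1) (by omega) ?_)
      rw [Nat.cast_sub hip]
      push_cast at hai ⊢; linarith
  have hhalf : poch (1 + a*(1/2)) j ≠ 0 := by
    intro h0
    rw [poch, Finset.prod_eq_zero_iff] at h0
    obtain ⟨i, hi, hai⟩ := h0
    rw [Finset.mem_range] at hi
    by_cases hij : i + 1 < j
    · exact h4c (poch_eq_zero _ _ (i+1) hij (by push_cast at hai ⊢; linarith))
    · have hi' : i = j - 1 := by omega
      have hir : (i:ℝ) = (j:ℝ) - 1 := by rw [hi', Nat.cast_sub (by omega)]; push_cast; ring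
      by_cases hjm : j ≤ m
      · refine h4a (poch_eq_zero _ _ (2*j-1) (by omega) ?_)
        rw [Nat.cast_sub (by omega)]
        push_cast at hai ⊢
        rw [hir] at hai; linarith
      · refine h4f (poch_eq_zero _ _ (j-1-m) (by omega) ?_)
        rw [Nat.cast_sub (by omega), Nat.cast_sub (by omega)]
        push_cast at hai ⊢
        rw [hir] at hai; linarith
  have h4c' : poch (a/2) j ≠ 0 := by
    rw [show a/2 = a*(1/2) by ring]; exact h4c
  have hhalf' : poch ((2+a)/2) j ≠ 0 := by
    rw [show (2+a)/2 = 1 + a*(1/2) by ring]; exact hhalf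
  have fj : ((j.factorial : ℕ) : ℝ) ≠ 0 := Nat.cast_ne_zero.mpr j.factorial_ne_zero
  have fm : ((m.factorial : ℕ) : ℝ) ≠ 0 := Nat.cast_ne_zero.mpr m.factorial_ne_zero
  have fn : ((n.factorial : ℕ) : ℝ) ≠ 0 := Nat.cast_ne_zero.mpr n.factorial_ne_zero
  have fmn : (((m+n).factorial : ℕ) : ℝ) ≠ 0 := Nat.cast_ne_zero.mpr (m+n).factorial_ne_zero
  have fmj : (((m+j).factorial : ℕ) : ℝ) ≠ 0 := Nat.cast_ne_zero.mpr (m+j).factorial_ne_zero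
  rw [hA, hB, hC, hD, hE, hF, hG, poch_neg_div,
      Nat.cast_choose ℝ (show j ≤ m+n+j by omega),
      Nat.cast_choose ℝ (show m ≤ m+n by omega),
      Nat.cast_choose ℝ (show m+j ≤ m+n+j by omega),
      show m+n+j-j = m+n from by omega,
      show m+n-m = n from by omega,
      show m+n+j-(m+j) = n from by omega,
      show (j+m).factorial = (m+j).factorial from by rw [Nat.add_comm]]
  field_simp
  ring_nf
  simp only [pow_mul', neg_one_sq, one_pow]
  field_simp
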